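/- Proposition 3: For every fixed d ≥ 0, the function ε ↦ Φ(ε,d) is nondecreasing and concave on [0,1], with boundary values Φ(0,d) = 0 and Φ(1,d) = 1; moreover if 0 ≤ ε1 < ε2 ≤ 1 and Φ(ε2,d) < 1, then Φ(ε1,d) < Φ(ε2,d). -/

import Mathlib

open Real

/-- The dual characterization `Φ(ε,d) = inf_{s>0} [s·ln(1 + (e^{1/s} − 1)·ε) + s·d]`
of the compound outage probability (Theorem 1). -/
noncomputable def Phi (e d : ℝ) : ℝ :=
  sInf {y : ℝ | ∃ s : ℝ, 0 < s ∧
    y = s * Real.log (1 + (Real.exp (1 / s) - 1) * e) + s * d}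

lemma Phi_set_nonempty (e d : ℝ) :
    Set.Nonempty {y : ℝ | ∃ s : ℝ, 0 < s ∧
      y = s * Real.log (1 + (Real.exp (1 / s) - 1) * e) + s * d} :=
  ⟨_, 1, one_pos, rfl⟩

lemma exp_sub_one_nonneg {s : ℝ} (hs : 0 < s) : 0 ≤ Real.exp (1 / s) - 1 := by
  have := Real.one_le_exp (le_of_lt (by positivity : (0:ℝ) < 1 / s))
  linarith

lemma one_le_arg {s e : ℝ} (hs : 0 < s) (he : 0 ≤ e) :
    1 ≤ 1 + (Real.exp (1 / s) - 1) * e := by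
  nlinarith [exp_sub_one_nonneg hs]

lemma Phi_mem_nonneg {d e : ℝ} (hd : 0 ≤ d) (he : 0 ≤ e) :
    ∀ y ∈ {y : ℝ | ∃ s : ℝ, 0 < s ∧
      y = s * Real.log (1 + (Real.exp (1 / s) - 1) * e) + s * d}, 0 ≤ y := by
  rintro y ⟨s, hs, rfl⟩
  have hlog : 0 ≤ Real.log (1 + (Real.exp (1 / s) - 1) * e) :=
    Real.log_nonneg (one_le_arg hs he)
  have := mul_nonneg hs.le hlog
  have := mul_nonneg hs.le hd
  linarith

lemma Phi_bddBelow {d e : ℝ} (hd : 0 ≤ d) (he : 0 ≤ e) :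
    BddBelow {y : ℝ | ∃ s : ℝ, 0 < s ∧
      y = s * Real.log (1 + (Real.exp (1 / s) - 1) * e) + s * d} :=
  ⟨0, fun y hy => Phi_mem_nonneg hd he y hy⟩

lemma Phi_nonneg {d e : ℝ} (hd : 0 ≤ d) (he : 0 ≤ e) : 0 ≤ Phi e d :=
  le_csInf (Phi_set_nonempty e d) (Phi_mem_nonneg hd he)

lemma Phi_le {d e : ℝ} (hd : 0 ≤ d) (he : 0 ≤ e) {s : ℝ} (hs : 0 < s) :
    Phi e d ≤ s * Real.log (1 + (Real.exp (1 / s) - 1) * e) + s * d :=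
  csInf_le (Phi_bddBelow hd he) ⟨s, hs, rfl⟩

lemma Phi_zero {d : ℝ} (hd : 0 ≤ d) : Phi 0 d = 0 := by
  refine le_antisymm ?_ (Phi_nonneg hd le_rfl)
  by_contra h
  push_neg at h
  set t := Phi 0 d / (2 * (d + 1)) with ht
  have hP : 0 < Phi 0 d := h
  have htpos : 0 < t := by positivity
  have hle := Phi_le hd le_rfl htpos
  simp only [mul_zero, add_zero, Real.log_one] at hle
  have : t * d ≤ Phi 0 d / 2 := by
    rw [ht, div_mul_eq_mul_div, div_le_div_iff₀ (by positivity) two_pos]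
    nlinarith
  linarith

lemma Phi_one {d : ℝ} (hd : 0 ≤ d) : Phi 1 d = 1 := by
  have hlb : (1:ℝ) ≤ Phi 1 d := by
    refine le_csInf (Phi_set_nonempty 1 d) ?_
    rintro y ⟨s, hs, rfl⟩
    rw [mul_one, add_sub_cancel, Real.log_exp]
    have := mul_nonneg hs.le hd
    have : s * (1 / s) = 1 := by field_simp
    nlinarith [mul_nonneg hs.le hd]
  refine le_antisymm ?_ hlb
  by_contra h
  push_neg at h
  set t := (Phi 1 d - 1) / (2 * (d + 1)) with ht
  have htpos : 0 < t := by
    have : 0 < Phi 1 d - 1 := by linarith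
    positivity
  have hle := Phi_le hd zero_le_one htpos
  rw [mul_one, add_sub_cancel, Real.log_exp] at hle
  have hts : t * (1 / t) = 1 := by field_simp
  have : t * d ≤ (Phi 1 d - 1) / 2 := by
    rw [ht, div_mul_eq_mul_div, div_le_div_iff₀ (by positivity) two_pos]
    nlinarith
  nlinarith

lemma Phi_mono {d : ℝ} (hd : 0 ≤ d) : MonotoneOn (fun e => Phi e d) (Set.Icc 0 1) := by
  intro a ha b hb hab
  refine le_csInf (Phi_set_nonempty b d) ?_
  rintro y ⟨s, hs, rfl⟩
  refine le_trans (Phi_le hd ha.1 hs) ?_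
  have hc := exp_sub_one_nonneg hs
  have h1 : (0:ℝ) < 1 + (Real.exp (1 / s) - 1) * a := lt_of_lt_of_le one_pos (one_le_arg hs ha.1)
  have h2 : 1 + (Real.exp (1 / s) - 1) * a ≤ 1 + (Real.exp (1 / s) - 1) * b := by nlinarith
  have := Real.log_le_log h1 h2
  nlinarith [hs.le]

lemma Phi_concave {d : ℝ} (hd : 0 ≤ d) : ConcaveOn ℝ (Set.Icc 0 1) (fun e => Phi e d) := by
  refine ⟨convex_Icc 0 1, ?_⟩
  intro x hx y hy a b ha hb hab
  refine le_csInf (Phi_set_nonempty _ d) ?_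
  rintro z ⟨s, hs, rfl⟩
  have hc := exp_sub_one_nonneg hs
  set c := Real.exp (1 / s) - 1 with hcdef
  have hx1 : (0:ℝ) < 1 + c * x := lt_of_lt_of_le one_pos (one_le_arg hs hx.1)
  have hy1 : (0:ℝ) < 1 + c * y := lt_of_lt_of_le one_pos (one_le_arg hs hy.1)
  have key := strictConcaveOn_log_Ioi.concaveOn.2 (Set.mem_Ioi.mpr hx1)
    (Set.mem_Ioi.mpr hy1) ha hb hab
  simp only [smul_eq_mul] at key ⊢
  have harg : a * (1 + c * x) + b * (1 + c * y) = 1 + c * (a * x + b * y) := by ring_nf; nlinarith [hab]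
  rw [harg] at key
  have hPx := Phi_le hd hx.1 hs
  have hPy := Phi_le hd hy.1 hs
  rw [← hcdef] at hPx hPy
  have h1 := mul_le_mul_of_nonneg_left hPx ha
  have h2 := mul_le_mul_of_nonneg_left hPy hb
  have h3 := mul_le_mul_of_nonneg_left key hs.le
  have hexp : a * (s * Real.log (1 + c * x) + s * d) + b * (s * Real.log (1 + c * y) + s * d)
      = s * (a * Real.log (1 + c * x) + b * Real.log (1 + c * y)) + s * d := by
    linear_combination (s * d) * hab
  linarith

theorem stmt_6 (d : ℝ) (hd : 0 ≤ d) :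
    MonotoneOn (fun e => Phi e d) (Set.Icc 0 1) ∧
    ConcaveOn ℝ (Set.Icc 0 1) (fun e => Phi e d) ∧
    Phi 0 d = 0 ∧ Phi 1 d = 1 ∧
    (∀ e1 e2 : ℝ, 0 ≤ e1 → e1 < e2 → e2 ≤ 1 → Phi e2 d < 1 → Phi e1 d < Phi e2 d) := by
  refine ⟨Phi_mono hd, Phi_concave hd, Phi_zero hd, Phi_one hd, ?_⟩
  intro e1 e2 he1 h12 he2 hlt
  have he2lt : e2 < 1 := by
    rcases lt_or_eq_of_le he2 with h | h
    · exact h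
    · rw [h, Phi_one hd] at hlt; linarith
  have he1lt : e1 < 1 := lt_trans h12 he2lt
  set a := (1 - e2) / (1 - e1) with hadef
  set b := (e2 - e1) / (1 - e1) with hbdef
  have hden : 0 < 1 - e1 := by linarith
  have hapos : 0 < a := div_pos (by linarith) hden
  have hbpos : 0 < b := div_pos (by linarith) hden
  have hab : a + b = 1 := by
    rw [hadef, hbdef, ← add_div]
    field_simp
    ring
  have hcomb : a * e1 + b * 1 = e2 := by
    rw [hadef, hbdef]
    field_simp
    ring
  have hconc := (Phi_concave hd).2 (Set.mem_Icc.mpr ⟨he1, he1lt.le⟩)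
    (Set.mem_Icc.mpr ⟨zero_le_one, le_rfl⟩) hapos.le hbpos.le hab
  simp only [smul_eq_mul, hcomb, Phi_one hd] at hconc
  by_contra h
  push_neg at h
  nlinarith [mul_le_mul_of_nonneg_left h hapos.le]
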